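/- arXiv:2505.22439 — 2 statements merged into one kernel-verified Lean document; each statement's English description precedes it below -/
import Mathlib

section
/- For y in the open unit ball B^{n+1}, the map F_y : S^n → S^n defined by F_y(x) = ((1-|y|^2)/|x+y|^2)(x+y) + y is a bijection of the unit sphere, with F_0 equal to the identity. -/
open scoped RealInnerProductSpace

section Aux

variable {E : Type*} [NormedAddCommGroup E] [InnerProductSpace ℝ E]

omit [InnerProductSpace ℝ E] in
lemma aux_pos (y x : E) (hy : ‖y‖ < 1) (hx : ‖x‖ = 1) : 0 < ‖x + y‖ := by
  have h := abs_norm_sub_norm_le x (x + y)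
  have h2 : ‖x - (x + y)‖ = ‖y‖ := by simp [norm_sub_rev]
  rw [h2] at h
  have := abs_le.mp h
  linarith [this.1]

lemma aux_norm (y x : E) (hy : ‖y‖ < 1) (hx : ‖x‖ = 1) :
    ‖((1 - ‖y‖ ^ 2) / ‖x + y‖ ^ 2) • (x + y) + y‖ = 1 := by
  have hp := aux_pos y x hy hx
  have hs : ‖x + y‖ ^ 2 ≠ 0 := by positivity
  set c := (1 - ‖y‖ ^ 2) / ‖x + y‖ ^ 2 with hc
  have hsq : ‖x + y‖ ^ 2 = 1 + 2 * ⟪x, y⟫ + ‖y‖ ^ 2 := by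
    rw [norm_add_sq_real, hx]; ring
  have hcs : c * ‖x + y‖ ^ 2 = 1 - ‖y‖ ^ 2 := div_mul_cancel₀ _ hs
  have key : ‖c • (x + y) + y‖ ^ 2 = 1 := by
    rw [norm_add_sq_real, norm_smul, real_inner_smul_left, inner_add_left,
      real_inner_self_eq_norm_sq, mul_pow, Real.norm_eq_abs, sq_abs]
    linear_combination c * hcs - c * hsq + hcs
  nlinarith [norm_nonneg (c • (x + y) + y), key]

lemma aux_inv (y x : E) (hy : ‖y‖ < 1) (hx : ‖x‖ = 1) :
    ((1 - ‖-y‖ ^ 2) / ‖(((1 - ‖y‖ ^ 2) / ‖x + y‖ ^ 2) • (x + y) + y) + -y‖ ^ 2) •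
      ((((1 - ‖y‖ ^ 2) / ‖x + y‖ ^ 2) • (x + y) + y) + -y) + -y = x := by
  have hp := aux_pos y x hy hx
  have hs : ‖x + y‖ ^ 2 ≠ 0 := by positivity
  set c := (1 - ‖y‖ ^ 2) / ‖x + y‖ ^ 2 with hc
  have hcpos : 0 < c := by
    apply div_pos _ (by positivity)
    nlinarith [norm_nonneg y]
  have hz : (c • (x + y) + y) + -y = c • (x + y) := by abel
  rw [hz, norm_smul, Real.norm_eq_abs, abs_of_pos hcpos, mul_pow, smul_smul, norm_neg]
  have hcs : c * ‖x + y‖ ^ 2 = 1 - ‖y‖ ^ 2 := div_mul_cancel₀ _ hs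
  have : (1 - ‖y‖ ^ 2) / (c ^ 2 * ‖x + y‖ ^ 2) * c = 1 := by
    field_simp
    nlinarith [hcs]
  rw [this, one_smul]
  abel

end Aux

/-- For `y` in the open unit ball, the map `F_y(x) = ((1-|y|²)/|x+y|²)(x+y) + y`
is a bijection of the unit sphere onto itself, with `F_0` the identity. -/
theorem stmt_1 (n : ℕ) (y : EuclideanSpace ℝ (Fin (n + 1))) (hy : ‖y‖ < 1) :
    Set.BijOn (fun x : EuclideanSpace ℝ (Fin (n + 1)) =>
        ((1 - ‖y‖ ^ 2) / ‖x + y‖ ^ 2) • (x + y) + y)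
      (Metric.sphere (0 : EuclideanSpace ℝ (Fin (n + 1))) 1)
      (Metric.sphere (0 : EuclideanSpace ℝ (Fin (n + 1))) 1) ∧
    ∀ x ∈ Metric.sphere (0 : EuclideanSpace ℝ (Fin (n + 1))) 1,
      ((1 - ‖(0 : EuclideanSpace ℝ (Fin (n + 1)))‖ ^ 2) / ‖x + 0‖ ^ 2) • (x + 0) + 0 = x := by
  have hy' : ‖-y‖ < 1 := by rwa [norm_neg]
  constructor
  · set f := fun x : EuclideanSpace ℝ (Fin (n + 1)) =>
      ((1 - ‖y‖ ^ 2) / ‖x + y‖ ^ 2) • (x + y) + y with hf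
    set g := fun x : EuclideanSpace ℝ (Fin (n + 1)) =>
      ((1 - ‖-y‖ ^ 2) / ‖x + -y‖ ^ 2) • (x + -y) + -y with hg
    have hmf : Set.MapsTo f (Metric.sphere 0 1) (Metric.sphere 0 1) := by
      intro x hx
      rw [mem_sphere_zero_iff_norm] at hx ⊢
      exact aux_norm y x hy hx
    have hmg : Set.MapsTo g (Metric.sphere 0 1) (Metric.sphere 0 1) := by
      intro x hx
      rw [mem_sphere_zero_iff_norm] at hx ⊢
      exact aux_norm (-y) x hy' hx
    have hinv : Set.InvOn g f (Metric.sphere 0 1) (Metric.sphere 0 1) := by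
      constructor
      · intro x hx
        rw [mem_sphere_zero_iff_norm] at hx
        exact aux_inv y x hy hx
      · intro x hx
        rw [mem_sphere_zero_iff_norm] at hx
        simp only [hf, hg]
        simpa only [neg_neg] using aux_inv (-y) x hy' hx
    exact Set.InvOn.bijOn hinv hmf hmg
  · intro x hx
    rw [mem_sphere_zero_iff_norm] at hx
    simp [hx]
end

section
/- The map F_y : S^n → S^n, F_y(x) = ((1-|y|^2)/|x+y|^2)(x+y) + y with y in the open unit ball, is a conformal map: its pullback of the round metric equals ρ_y^2 times the round metric, where ρ_y(x) = (1-|y|^2)/|x+y|^2. -/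
open scoped RealInnerProductSpace

/-- The map `F_y` is conformal on the unit sphere: for tangent vectors `u, v` at a
point `x` of the sphere, the pullback metric is `ρ_y(x)²` times the round metric,
where `ρ_y(x) = (1-|y|²)/|x+y|²`. -/
theorem stmt_2 (n : ℕ) (y : EuclideanSpace ℝ (Fin (n + 1))) (hy : ‖y‖ < 1)
    (F : EuclideanSpace ℝ (Fin (n + 1)) → EuclideanSpace ℝ (Fin (n + 1)))
    (hF : ∀ x, F x = ((1 - ‖y‖ ^ 2) / ‖x + y‖ ^ 2) • (x + y) + y)
    (x : EuclideanSpace ℝ (Fin (n + 1))) (hx : ‖x‖ = 1) :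
    ∀ u v : EuclideanSpace ℝ (Fin (n + 1)), ⟪u, x⟫ = 0 → ⟪v, x⟫ = 0 →
      ⟪fderiv ℝ F x u, fderiv ℝ F x v⟫ = ((1 - ‖y‖ ^ 2) / ‖x + y‖ ^ 2) ^ 2 * ⟪u, v⟫ := by
  intro u v hu hv
  have hz : x + y ≠ 0 := by
    intro h
    have hxy : x = -y := by linear_combination (norm := module) h
    rw [hxy, norm_neg] at hx
    linarith
  set z : EuclideanSpace ℝ (Fin (n + 1)) := x + y with hzdef
  set r : ℝ := ‖z‖ ^ 2 with hrdef
  have hr : r ≠ 0 := pow_ne_zero _ (norm_ne_zero_iff.mpr hz)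
  set c : ℝ := 1 - ‖y‖ ^ 2 with hcdef
  -- derivative of p ↦ ‖p + y‖ ^ 2
  have h1 : HasFDerivAt (fun p : EuclideanSpace ℝ (Fin (n + 1)) => p + y)
      (ContinuousLinearMap.id ℝ (EuclideanSpace ℝ (Fin (n + 1)))) x :=
    (hasFDerivAt_id x).add_const y
  have h2 := h1.norm_sq
  have h3 := (hasDerivAt_inv hr).comp_hasFDerivAt x h2
  simp only [Function.comp_def] at h3
  have h4 := h3.const_mul c
  have h5 := (h4.smul h1).add_const y
  beta_reduce at h5
  have hFeq : F = fun p : EuclideanSpace ℝ (Fin (n + 1)) =>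
      (c * (‖p + y‖ ^ 2)⁻¹) • (p + y) + y := by
    funext p
    rw [hF p, div_eq_mul_inv]
  rw [hFeq]
  have hD := h5.fderiv
  have evalL : ∀ w : EuclideanSpace ℝ (Fin (n + 1)),
      (fderiv ℝ (fun p : EuclideanSpace ℝ (Fin (n + 1)) =>
        (c * (‖p + y‖ ^ 2)⁻¹) • (p + y) + y) x) w
        = (c * r⁻¹) • w + (c * (-(r ^ 2)⁻¹ * (2 * ⟪z, w⟫))) • z := by
    intro w
    rw [show fderiv ℝ (fun p : EuclideanSpace ℝ (Fin (n + 1)) =>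
        (c * (‖p + y‖ ^ 2)⁻¹) • (p + y) + y) x = _ from hD]
    simp only [ContinuousLinearMap.add_apply, ContinuousLinearMap.coe_smul', Pi.smul_apply,
      ContinuousLinearMap.id_apply, ContinuousLinearMap.smulRight_apply,
      ContinuousLinearMap.coe_comp', Function.comp_apply, innerSL_apply_apply, smul_eq_mul,
      smul_smul, nsmul_eq_mul, Nat.cast_ofNat]
    rw [hrdef, hzdef]
    ring_nf
    simp only [Pi.mul_apply, Pi.ofNat_apply, Function.comp_apply,
      ContinuousLinearMap.id_apply, innerSL_apply_apply]
    ring_nf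
  rw [evalL u, evalL v]
  have hux : ⟪x, u⟫ = 0 := by rw [real_inner_comm]; exact hu
  have hvx : ⟪x, v⟫ = 0 := by rw [real_inner_comm]; exact hv
  have hzu : ⟪z, u⟫ = ⟪y, u⟫ := by rw [hzdef, inner_add_left, hux, zero_add]
  have hzv : ⟪z, v⟫ = ⟪y, v⟫ := by rw [hzdef, inner_add_left, hvx, zero_add]
  have huz : ⟪u, z⟫ = ⟪y, u⟫ := by rw [real_inner_comm]; exact hzu
  have hzz : ⟪z, z⟫ = r := real_inner_self_eq_norm_sq z
  have expand : ⟪(c * r⁻¹) • u + (c * (-(r ^ 2)⁻¹ * (2 * ⟪z, u⟫))) • z,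
      (c * r⁻¹) • v + (c * (-(r ^ 2)⁻¹ * (2 * ⟪z, v⟫))) • z⟫
      = (c * r⁻¹) * ((c * r⁻¹) * ⟪u, v⟫)
        + (c * r⁻¹) * ((c * (-(r ^ 2)⁻¹ * (2 * ⟪z, v⟫))) * ⟪u, z⟫)
        + (c * (-(r ^ 2)⁻¹ * (2 * ⟪z, u⟫))) * ((c * r⁻¹) * ⟪z, v⟫)
        + (c * (-(r ^ 2)⁻¹ * (2 * ⟪z, u⟫))) * ((c * (-(r ^ 2)⁻¹ * (2 * ⟪z, v⟫))) * ⟪z, z⟫) := by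
    simp only [inner_add_left, inner_add_right, real_inner_smul_left, real_inner_smul_right]
    ring
  rw [expand]
  simp only [hzu, hzv, huz, hzz]
  rw [div_eq_mul_inv]
  field_simp
  ring
end
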